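/- (Trichotomous decision: when counterfactual risk favors a less invasive treatment.) Let decisions take values in {0, 1, 2} and outcomes be binary. Normalize ℓ_0 = 1 and ℓ_1 = 0, let c_0, c_1, c_2 ∈ ℝ and r_0, r_1 ≥ 0, and let μ be a pmf on potential-outcome vectors y : {0,1,2} → {0,1} with μ_j = Pr(Y(j) = 1). For a constant decision d, the standard risk is R(d; ℓStd) = (1 − μ_d) + c_d and the counterfactual risk is R(d; ℓCof) = (1 − μ_d) + c_d + Σ over j < d of r_j · μ_j. If k < d, μ_k > 0, and 0 < (μ_d − c_d) − (μ_k − c_k) < r_k · μ_k, then R(d; ℓStd) < R(k; ℓStd) while R(k; ℓCof) < R(d; ℓCof); that is, the standard risk prefers d but the counterfactual risk prefers the less invasive treatment k. -/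

import Mathlib

/-- Marginal probability `μ_j = Pr(Y(j) = 1)` under the law `μ` of the potential-outcome
vector. -/
def mu1 (μ : (Fin 3 → Fin 2) → ℝ) (j : Fin 3) : ℝ :=
  ∑ y ∈ Finset.univ.filter (fun y : Fin 3 → Fin 2 => y j = 1), μ y

/-- Standard risk of the constant decision `d` (with `ℓ_0 = 1`, `ℓ_1 = 0`):
`E_μ[(1 − Y(d)) + c_d]`. -/
def riskStd (c : Fin 3 → ℝ) (μ : (Fin 3 → Fin 2) → ℝ) (d : Fin 3) : ℝ :=
  ∑ y : Fin 3 → Fin 2, ((1 - ((y d : ℕ) : ℝ)) + c d) * μ y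

/-- Counterfactual risk of the constant decision `d` (with `ℓ_0 = 1`, `ℓ_1 = 0`):
`E_μ[(1 − Y(d)) + c_d + Σ_{j < d} r_j · Y(j)]`. -/
def riskCof (c r : Fin 3 → ℝ) (μ : (Fin 3 → Fin 2) → ℝ) (d : Fin 3) : ℝ :=
  ∑ y : Fin 3 → Fin 2,
    ((1 - ((y d : ℕ) : ℝ)) + c d +
      ∑ j ∈ Finset.univ.filter (fun j : Fin 3 => j < d), r j * ((y j : ℕ) : ℝ)) * μ y


lemma mu1_eq (μ : (Fin 3 → Fin 2) → ℝ) (e : Fin 3) :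
    ∑ y : Fin 3 → Fin 2, ((y e : ℕ) : ℝ) * μ y = mu1 μ e := by
  rw [mu1, Finset.sum_filter]
  refine Finset.sum_congr rfl fun y _ => ?_
  have h : y e = 0 ∨ y e = 1 := by omega
  rcases h with h | h <;> simp [h]

lemma mu1_nonneg (μ : (Fin 3 → Fin 2) → ℝ) (hnn : ∀ y, 0 ≤ μ y) (e : Fin 3) :
    0 ≤ mu1 μ e :=
  Finset.sum_nonneg fun y _ => hnn y

lemma riskStd_eq (c : Fin 3 → ℝ) (μ : (Fin 3 → Fin 2) → ℝ)
    (hsum : ∑ y, μ y = 1) (e : Fin 3) :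
    riskStd c μ e = (1 - mu1 μ e) + c e := by
  have h : riskStd c μ e =
      ∑ y : Fin 3 → Fin 2, ((1 + c e) * μ y - ((y e : ℕ) : ℝ) * μ y) := by
    refine Finset.sum_congr rfl fun y _ => by ring
  rw [riskStd] at *
  rw [h, Finset.sum_sub_distrib, ← Finset.mul_sum, hsum, mu1_eq]
  ring

lemma riskCof_eq (c r : Fin 3 → ℝ) (μ : (Fin 3 → Fin 2) → ℝ)
    (hsum : ∑ y, μ y = 1) (e : Fin 3) :
    riskCof c r μ e = (1 - mu1 μ e) + c e +
      ∑ j ∈ Finset.univ.filter (fun j : Fin 3 => j < e), r j * mu1 μ j := by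
  have h : riskCof c r μ e =
      ∑ y : Fin 3 → Fin 2, ((1 + c e) * μ y - ((y e : ℕ) : ℝ) * μ y
        + ∑ j ∈ Finset.univ.filter (fun j : Fin 3 => j < e),
            r j * (((y j : ℕ) : ℝ) * μ y)) := by
    refine Finset.sum_congr rfl fun y _ => ?_
    rw [add_mul, Finset.sum_mul]
    ring_nf
  rw [h, Finset.sum_add_distrib, Finset.sum_sub_distrib, ← Finset.mul_sum, hsum, mu1_eq,
    Finset.sum_comm]
  have h2 : ∀ j ∈ Finset.univ.filter (fun j : Fin 3 => j < e),
      ∑ y : Fin 3 → Fin 2, r j * (((y j : ℕ) : ℝ) * μ y) = r j * mu1 μ j := by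
    intro j _
    rw [← Finset.mul_sum, mu1_eq]
  rw [Finset.sum_congr rfl h2]
  ring

/-- Trichotomous decision: when counterfactual risk favors a less invasive
treatment. With `ℓ_0 = 1`, `ℓ_1 = 0`, `r_0, r_1 ≥ 0`, for a pmf `μ` on potential-outcome
vectors: the standard risk of a constant decision `d` is `(1 − μ_d) + c_d` and the
counterfactual risk is `(1 − μ_d) + c_d + Σ_{j < d} r_j μ_j`; moreover, if `k < d`, `μ_k > 0`,
and `0 < (μ_d − c_d) − (μ_k − c_k) < r_k · μ_k`, then the standard risk prefers `d` while the
counterfactual risk prefers the less invasive treatment `k`. -/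
theorem stmt_17 (c r : Fin 3 → ℝ) (hr0 : 0 ≤ r 0) (hr1 : 0 ≤ r 1)
    (μ : (Fin 3 → Fin 2) → ℝ)
    (hnn : ∀ y, 0 ≤ μ y)
    (hsum : ∑ y, μ y = 1)
    (k d : Fin 3) (hkd : k < d)
    (hμk : 0 < mu1 μ k)
    (hlow : 0 < (mu1 μ d - c d) - (mu1 μ k - c k))
    (hhigh : (mu1 μ d - c d) - (mu1 μ k - c k) < r k * mu1 μ k) :
    (∀ e : Fin 3, riskStd c μ e = (1 - mu1 μ e) + c e) ∧
    (∀ e : Fin 3, riskCof c r μ e =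
      (1 - mu1 μ e) + c e +
        ∑ j ∈ Finset.univ.filter (fun j : Fin 3 => j < e), r j * mu1 μ j) ∧
    riskStd c μ d < riskStd c μ k ∧
    riskCof c r μ k < riskCof c r μ d := by
  have h0 := mu1_nonneg μ hnn 0
  have h1 := mu1_nonneg μ hnn 1
  refine ⟨fun e => riskStd_eq c μ hsum e, fun e => riskCof_eq c r μ hsum e, ?_, ?_⟩
  · rw [riskStd_eq c μ hsum, riskStd_eq c μ hsum]; linarith
  · rw [riskCof_eq c r μ hsum, riskCof_eq c r μ hsum]
    fin_cases k <;> fin_cases d <;> simp_all <;>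
      (try simp only [show (Finset.univ.filter (fun j : Fin 3 => j = 0)) = {0} by decide,
        show (Finset.univ.filter (fun j : Fin 3 => j < 2)) = {0, 1} by decide,
        Finset.sum_insert (by decide : (0 : Fin 3) ∉ ({1} : Finset (Fin 3))),
        Finset.sum_singleton]) <;>
      nlinarith [mul_nonneg hr0 h0, mul_nonneg hr1 h1]
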